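/- Let F be a finite field with q elements and let U be a set of points of the projective space PG(n,q), i.e., of the projectivization of F^{n+1}. Suppose that for every pair of distinct points P, Q, the line through P and Q (the set of points whose representing 1-dimensional subspace is contained in the span of the representing subspaces of P and Q) meets U in exactly 0, 1, or q+1 points. Then U is the set of points of a projective subspace of PG(n,q) (i.e., U is the carrier of a Projectivization.Subspace: whenever nonzero vectors v, w with v + w ≠ 0 represent points of U, the point represented by v + w also lies in U). -/

import Mathlib

/-- If a set `U` of points of `PG(n,q)` meets every line in `0`, `1` or `q + 1`
points, then `U` is the point set of a projective subspace. -/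
theorem subspace_of_line_intersections {F : Type*} [Field F] [Fintype F] {n : ℕ}
    (U : Set (Projectivization F (Fin (n + 1) → F)))
    (h : ∀ P Q : Projectivization F (Fin (n + 1) → F), P ≠ Q →
      (U ∩ {R | R.submodule ≤ P.submodule ⊔ Q.submodule}).ncard = 0 ∨
      (U ∩ {R | R.submodule ≤ P.submodule ⊔ Q.submodule}).ncard = 1 ∨
      (U ∩ {R | R.submodule ≤ P.submodule ⊔ Q.submodule}).ncard = Fintype.card F + 1) :
    ∃ W : Projectivization.Subspace F (Fin (n + 1) → F), U = ↑W := by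
  refine ⟨⟨U, ?_⟩, rfl⟩
  intro v w hv hw hvw hvU hwU
  set P := Projectivization.mk F v hv with hP
  set Q := Projectivization.mk F w hw with hQ
  by_cases hPQ : P = Q
  · -- v and w are proportional, so mk (v+w) = Q
    rw [hP, hQ, Projectivization.mk_eq_mk_iff'] at hPQ
    obtain ⟨a, ha⟩ := hPQ
    have h1 : v + w = (a + 1) • w := by rw [add_smul, one_smul, ha]
    have ha1 : a + 1 ≠ 0 := by
      intro h0
      apply hvw
      rw [h1, h0, zero_smul]
    have : Projectivization.mk F (v + w) hvw = Q := by
      rw [hQ, Projectivization.mk_eq_mk_iff']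
      exact ⟨a + 1, h1.symm⟩
    rw [this]; exact hwU
  · -- the line through P and Q
    haveI : Finite (Projectivization F (Fin (n + 1) → F)) := Quotient.finite _
    have hindep : ∀ c : F, v + c • w ≠ 0 := by
      intro c h0
      apply hPQ
      have hc : c ≠ 0 := by
        intro hc0; apply hv; simpa [hc0] using h0
      rw [hP, hQ, Projectivization.mk_eq_mk_iff']
      refine ⟨-c, ?_⟩
      have : v = -(c • w) := by linear_combination h0
      rw [this, neg_smul]
    set L : Set (Projectivization F (Fin (n + 1) → F)) :=
      {R | R.submodule ≤ P.submodule ⊔ Q.submodule} with hL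
    have hspan : P.submodule ⊔ Q.submodule = Submodule.span F {v, w} := by
      rw [hP, hQ, Projectivization.submodule_mk, Projectivization.submodule_mk,
        ← Submodule.span_union, Set.singleton_union]
    -- the line is contained in a set of size ≤ q + 1
    set f : F → Projectivization F (Fin (n + 1) → F) :=
      fun c => Projectivization.mk F (v + c • w) (hindep c) with hf
    have hLsub : L ⊆ insert Q (f '' Set.univ) := by
      intro R hR
      rw [hL, Set.mem_setOf_eq, hspan, Projectivization.submodule_eq,
        Submodule.span_singleton_le_iff_mem, Submodule.mem_span_pair] at hR
      obtain ⟨a, b, hab⟩ := hR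
      by_cases ha : a = 0
      · left
        have hb : b ≠ 0 := by
          intro hb0; exact R.rep_nonzero (by rw [← hab, ha, hb0, zero_smul, zero_smul, add_zero])
        rw [hQ, ← R.mk_rep, Projectivization.mk_eq_mk_iff']
        exact ⟨b, by rw [← hab, ha, zero_smul, zero_add]⟩
      · right
        refine ⟨b / a, Set.mem_univ _, ?_⟩
        rw [hf, ← R.mk_rep, Projectivization.mk_eq_mk_iff']
        refine ⟨a⁻¹, ?_⟩
        rw [← hab]
        rw [smul_add, smul_smul, smul_smul]
        field_simp
        rw [one_smul]
    have hfin : (insert Q (f '' Set.univ)).Finite := Set.toFinite _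
    have hcard_le : (insert Q (f '' Set.univ)).ncard ≤ Fintype.card F + 1 := by
      calc (insert Q (f '' Set.univ)).ncard ≤ (f '' Set.univ).ncard + 1 :=
            Set.ncard_insert_le _ _
        _ ≤ (Set.univ : Set F).ncard + 1 :=
            Nat.add_le_add_right (Set.ncard_image_le (Set.toFinite _)) 1
        _ = Fintype.card F + 1 := by rw [Set.ncard_univ, Nat.card_eq_fintype_card]
    -- the intersection has q+1 points
    have hPmem : P ∈ U ∩ L := ⟨hvU, by
      rw [hL, Set.mem_setOf_eq]; exact le_sup_left⟩
    have hQmem : Q ∈ U ∩ L := ⟨hwU, by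
      rw [hL, Set.mem_setOf_eq]; exact le_sup_right⟩
    have hbig : (U ∩ L).ncard = Fintype.card F + 1 := by
      rcases h P Q hPQ with h0 | h1 | hq
      · exfalso
        rw [Set.ncard_eq_zero (Set.toFinite _)] at h0
        rw [h0] at hPmem; exact hPmem
      · exfalso
        rw [Set.ncard_eq_one] at h1
        obtain ⟨x, hx⟩ := h1
        rw [hx] at hPmem hQmem
        exact hPQ (hPmem.trans hQmem.symm)
      · exact hq
    have heq : U ∩ L = insert Q (f '' Set.univ) := by
      apply Set.eq_of_subset_of_ncard_le (Set.inter_subset_right.trans hLsub) ?_ hfin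
      rw [hbig]; exact hcard_le
    have hLU : L ⊆ U := by
      intro R hR
      have : R ∈ U ∩ L := heq ▸ hLsub hR
      exact this.1
    apply hLU
    rw [hL, Set.mem_setOf_eq, hspan, Projectivization.submodule_mk,
      Submodule.span_singleton_le_iff_mem]
    exact Submodule.add_mem _ (Submodule.subset_span (by simp))
      (Submodule.subset_span (by simp))
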